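/- Let f : M → ℝ^{n+1} be an immersion of a closed oriented n-manifold with Gauss map G_f. If G_f(M) ≠ S^n, then the tangent bundle TM is trivial (M is parallelizable). -/

import Mathlib

set_option maxHeartbeats 1000000

open scoped RealInnerProductSpace Manifold
open Set Function

section Reflection

variable {V : Type*} [NormedAddCommGroup V] [InnerProductSpace ℝ V]

/-- The reflection exchanging two given unit vectors (as a linear-map formula in `u = a - b`). -/
noncomputable def auxRefl (u : V) : V →L[ℝ] V :=
  ContinuousLinearMap.id ℝ V -
    (2 / ‖u‖ ^ 2) • (ContinuousLinearMap.smulRightL ℝ V V (innerSL ℝ u) u)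

lemma auxRefl_apply (u y : V) : auxRefl u y = y - (2 / ‖u‖ ^ 2) • (⟪u, y⟫ • u) := by
  simp [auxRefl, ContinuousLinearMap.smulRightL, ContinuousLinearMap.smul_apply]

lemma auxRefl_cont {X : Type*} [TopologicalSpace X] {w : X → V} (hw : Continuous w)
    (hw0 : ∀ x, w x ≠ 0) : Continuous fun x => auxRefl (w x) := by
  unfold auxRefl
  apply continuous_const.sub
  have h1 : Continuous fun x => (2 : ℝ) / ‖w x‖ ^ 2 :=
    continuous_const.div ((hw.norm).pow 2)
      (fun x => pow_ne_zero 2 (norm_ne_zero_iff.mpr (hw0 x)))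
  have h2 : Continuous fun x => ContinuousLinearMap.smulRightL ℝ V V (innerSL ℝ (w x)) (w x) := by
    have ha : Continuous fun x => ContinuousLinearMap.smulRightL ℝ V V (innerSL ℝ (w x)) :=
      (ContinuousLinearMap.smulRightL ℝ V V).continuous.comp ((innerSL ℝ).continuous.comp hw)
    exact ha.clm_apply hw
  exact h1.smul h2

lemma auxRefl_inner {p G : V} (hp : ‖p‖ = 1) (hG : ‖G‖ = 1) (hGp : G ≠ p) (y : V) :
    ⟪p, auxRefl (G - p) y⟫ = ⟪G, y⟫ := by
  have hu : G - p ≠ 0 := sub_ne_zero.mpr hGp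
  have hnu : ‖G - p‖ ^ 2 ≠ 0 := pow_ne_zero 2 (norm_ne_zero_iff.mpr hu)
  have hn : ‖G - p‖ ^ 2 = 2 - 2 * ⟪G, p⟫ := by
    rw [norm_sub_sq_real, hp, hG]; ring
  have hpu : ⟪p, G - p⟫ = ⟪G, p⟫ - 1 := by
    rw [inner_sub_right, real_inner_comm p G, real_inner_self_eq_norm_sq, hp]; norm_num
  have hGy : ⟪G, y⟫ = ⟪p, y⟫ + ⟪G - p, y⟫ := by
    rw [inner_sub_left]; ring
  rw [auxRefl_apply, inner_sub_right, real_inner_smul_right, real_inner_smul_right, hpu, hGy, hn]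
  rw [hn] at hnu
  have hnu' : 1 - ⟪G, p⟫ ≠ 0 := fun h => hnu (by linarith)
  field_simp
  ring

lemma auxRefl_invol {u : V} (hu : u ≠ 0) (y : V) : auxRefl u (auxRefl u y) = y := by
  have hnu : ‖u‖ ^ 2 ≠ 0 := pow_ne_zero 2 (norm_ne_zero_iff.mpr hu)
  rw [auxRefl_apply, auxRefl_apply, inner_sub_right, real_inner_smul_right,
    real_inner_smul_right, real_inner_self_eq_norm_sq]
  have h2 : (2 : ℝ) / ‖u‖ ^ 2 * (⟪u, y⟫ * ‖u‖ ^ 2) = 2 * ⟪u, y⟫ := by field_simp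
  rw [h2]
  have h3 : ⟪u, y⟫ - 2 * ⟪u, y⟫ = -⟪u, y⟫ := by ring
  rw [h3]
  simp [smul_smul]

lemma auxRefl_injective {u : V} (hu : u ≠ 0) : Function.Injective (auxRefl u) :=
  fun a b hab => by
    have := congrArg (auxRefl u) hab
    rwa [auxRefl_invol hu, auxRefl_invol hu] at this

end Reflection

theorem aux_mfderiv_decomp {n : ℕ} {M : Type*} [TopologicalSpace M]
    [ChartedSpace (EuclideanSpace ℝ (Fin n)) M] [IsManifold (𝓡 n) (⊤ : ℕ∞) M]
    {F' : Type*} [NormedAddCommGroup F'] [NormedSpace ℝ F']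
    (f : M → F') (hf : ContMDiff (𝓡 n) 𝓘(ℝ, F') (⊤ : ℕ∞) f)
    (q₀ q : M) (hq : q ∈ (extChartAt (𝓡 n) q₀).source) :
    (mfderiv (𝓡 n) 𝓘(ℝ, F') f q : EuclideanSpace ℝ (Fin n) →L[ℝ] F') =
      (fderiv ℝ (f ∘ (extChartAt (𝓡 n) q₀).symm) (extChartAt (𝓡 n) q₀ q)) ∘L
        tangentCoordChange (𝓡 n) q q₀ q := by
  have h1 : HasMFDerivAt (𝓡 n) 𝓘(ℝ, EuclideanSpace ℝ (Fin n)) (extChartAt (𝓡 n) q₀) q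
      ((tangentCoordChange (𝓡 n) q q₀ q :
          EuclideanSpace ℝ (Fin n) →L[ℝ] EuclideanSpace ℝ (Fin n)) :
        TangentSpace (𝓡 n) q →L[ℝ]
          TangentSpace 𝓘(ℝ, EuclideanSpace ℝ (Fin n)) (extChartAt (𝓡 n) q₀ q)) := by
    refine ⟨(continuousOn_extChartAt q₀).continuousAt (extChartAt_source_mem_nhds' hq), ?_⟩
    have h := hasFDerivWithinAt_tangentCoordChange (I := 𝓡 n) (x := q) (y := q₀)
      ⟨mem_extChartAt_source q, hq⟩
    refine HasFDerivAt.hasFDerivWithinAt ?_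
    simp [writtenInExtChartAt, Function.comp_def, chartAt_self_eq, hasFDerivWithinAt_univ] at h ⊢
    exact h
  have hsy : MDifferentiableAt 𝓘(ℝ, EuclideanSpace ℝ (Fin n)) (𝓡 n)
      (extChartAt (𝓡 n) q₀).symm (extChartAt (𝓡 n) q₀ q) := by
    have h := mdifferentiableWithinAt_extChartAt_symm (I := 𝓡 n) (x := q₀)
      ((extChartAt (𝓡 n) q₀).map_source hq)
    rwa [(𝓡 n).range_eq_univ, mdifferentiableWithinAt_univ] at h
  have h2 : MDifferentiableAt 𝓘(ℝ, EuclideanSpace ℝ (Fin n)) 𝓘(ℝ, F')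
      (f ∘ (extChartAt (𝓡 n) q₀).symm) (extChartAt (𝓡 n) q₀ q) := by
    refine MDifferentiableAt.comp (extChartAt (𝓡 n) q₀ q) ?_ hsy
    exact (hf _).mdifferentiableAt (by simp)
  have h4 := (h2.hasMFDerivAt).comp q h1
  have h5 : (f ∘ (extChartAt (𝓡 n) q₀).symm) ∘ (extChartAt (𝓡 n) q₀) =ᶠ[nhds q] f := by
    filter_upwards [extChartAt_source_mem_nhds' hq] with z hz
    simp [Function.comp_def, (extChartAt (𝓡 n) q₀).left_inv hz,
      (chartAt (EuclideanSpace ℝ (Fin n)) q₀).left_inv (by simpa [extChartAt_source] using hz)]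
  have h6 := h4.congr_of_eventuallyEq h5.symm
  rw [h6.mfderiv, mfderiv_eq_fderiv]
  rfl

/-- If a closed oriented `n`-manifold `M` admits a smooth immersion `f` into `ℝⁿ⁺¹` whose
Gauss map `G_f` is not surjective onto the sphere, then `M` is parallelizable: its tangent
bundle admits a global continuous frame. -/
theorem parallelizable_of_gauss_not_surjective {n : ℕ}
    {M : Type*} [TopologicalSpace M] [ChartedSpace (EuclideanSpace ℝ (Fin n)) M]
    [IsManifold (𝓡 n) (⊤ : ℕ∞) M] [CompactSpace M]
    (f : M → EuclideanSpace ℝ (Fin (n + 1)))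
    (hf : ContMDiff (𝓡 n) 𝓘(ℝ, EuclideanSpace ℝ (Fin (n + 1))) (⊤ : ℕ∞) f)
    (himm : ∀ q, Function.Injective
      (mfderiv (𝓡 n) 𝓘(ℝ, EuclideanSpace ℝ (Fin (n + 1))) f q))
    (G : M → EuclideanSpace ℝ (Fin (n + 1))) (hGc : Continuous G)
    (hGu : ∀ q, ‖G q‖ = 1)
    (hGn : ∀ q (v : TangentSpace (𝓡 n) q),
      ⟪G q, mfderiv (𝓡 n) 𝓘(ℝ, EuclideanSpace ℝ (Fin (n + 1))) f q v⟫ = 0)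
    (hGns : Set.range G ≠ Metric.sphere (0 : EuclideanSpace ℝ (Fin (n + 1))) 1) :
    ∃ v : Fin n → (∀ q : M, TangentSpace (𝓡 n) q),
      (∀ i, Continuous fun q => (⟨q, v i q⟩ : TangentBundle (𝓡 n) M)) ∧
      ∀ q : M, LinearIndependent ℝ (fun i => v i q) ∧
        Submodule.span ℝ (Set.range fun i => v i q) = ⊤ := by
  classical
  -- the missed point `p`
  have hrange : Set.range G ⊆ Metric.sphere (0 : EuclideanSpace ℝ (Fin (n + 1))) 1 := by
    rintro _ ⟨q, rfl⟩
    simpa [mem_sphere_zero_iff_norm] using hGu q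
  obtain ⟨p, hp1, hpG⟩ : ∃ p : EuclideanSpace ℝ (Fin (n + 1)), ‖p‖ = 1 ∧ ∀ q, G q ≠ p := by
    rcases Set.exists_of_ssubset (ssubset_of_subset_of_ne hrange hGns) with ⟨p, hps, hpr⟩
    exact ⟨p, mem_sphere_zero_iff_norm.mp hps, fun q h => hpr ⟨q, h⟩⟩
  have hp0 : p ≠ 0 := fun h => by simp [h] at hp1
  -- the orthogonal complement of `p` and the comparison map `ψ`
  set K : Submodule ℝ (EuclideanSpace ℝ (Fin (n + 1))) := (ℝ ∙ p)ᗮ with hK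
  have hKfin : Module.finrank ℝ K = n := by
    have h1 : Module.finrank ℝ (ℝ ∙ p : Submodule ℝ (EuclideanSpace ℝ (Fin (n + 1)))) = 1 :=
      finrank_span_singleton hp0
    have h2 := Submodule.finrank_add_finrank_orthogonal
      (K := (ℝ ∙ p : Submodule ℝ (EuclideanSpace ℝ (Fin (n + 1)))))
    rw [h1, finrank_euclideanSpace_fin] at h2
    rw [hK]
    omega
  have hne : Nonempty (K ≃ₗ[ℝ] EuclideanSpace ℝ (Fin n)) :=
    FiniteDimensional.nonempty_linearEquiv_of_finrank_eq (by
      rw [hKfin, finrank_euclideanSpace_fin])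
  let e' : K ≃L[ℝ] EuclideanSpace ℝ (Fin n) := hne.some.toContinuousLinearEquiv
  let ψ : EuclideanSpace ℝ (Fin (n + 1)) →L[ℝ] EuclideanSpace ℝ (Fin n) :=
    (e' : K →L[ℝ] EuclideanSpace ℝ (Fin n)).comp (K.orthogonalProjectionOnto)
  have hψK : ∀ y (hy : y ∈ K), ψ y = e' ⟨y, hy⟩ := by
    intro y hy
    simp only [ψ, ContinuousLinearMap.comp_apply]
    rw [show (K.orthogonalProjectionOnto) y = ⟨y, hy⟩ from
      Submodule.orthogonalProjectionOnto_mem_subspace_eq_self (⟨y, hy⟩ : K)]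
    rfl
  have hψinj : ∀ y, y ∈ K → ψ y = 0 → y = 0 := by
    intro y hy h
    rw [hψK y hy] at h
    have h2 : (⟨y, hy⟩ : K) = 0 := e'.injective (by simp [h])
    simpa using congrArg Subtype.val h2
  -- the reflection family
  have hu : ∀ q, G q - p ≠ 0 := fun q => sub_ne_zero.mpr (hpG q)
  set A : M → EuclideanSpace ℝ (Fin (n + 1)) →L[ℝ] EuclideanSpace ℝ (Fin (n + 1)) :=
    fun q => auxRefl (G q - p) with hA
  have hAc : Continuous A := auxRefl_cont (hGc.sub continuous_const) hu
  have hA_inner : ∀ q y, ⟪p, A q y⟫ = ⟪G q, y⟫ := fun q y =>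
    auxRefl_inner hp1 (hGu q) (hpG q) y
  have hAinj : ∀ q, Function.Injective (A q) := fun q => auxRefl_injective (hu q)
  -- the derivative family, as plain continuous linear maps
  set Df : ∀ q : M, EuclideanSpace ℝ (Fin n) →L[ℝ] EuclideanSpace ℝ (Fin (n + 1)) :=
    fun q => mfderiv (𝓡 n) 𝓘(ℝ, EuclideanSpace ℝ (Fin (n + 1))) f q with hDf
  have hDfinj : ∀ q, Function.Injective (Df q) := fun q => himm q
  have hmemK : ∀ q x, A q (Df q x) ∈ K := by
    intro q x
    rw [hK, Submodule.mem_orthogonal_singleton_iff_inner_right, hA_inner]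
    exact hGn q x
  -- the family of linear automorphisms
  set Mq : ∀ q : M, EuclideanSpace ℝ (Fin n) →L[ℝ] EuclideanSpace ℝ (Fin n) :=
    fun q => ψ.comp ((A q).comp (Df q)) with hMq
  have hMzero : ∀ q x, Mq q x = 0 → x = 0 := by
    intro q x hx
    have h1 : A q (Df q x) = 0 := hψinj _ (hmemK q x) hx
    have h2 : Df q x = 0 := hAinj q (by simpa using h1)
    exact hDfinj q (by simpa using h2)
  have hMinj : ∀ q, Function.Injective (Mq q) := by
    intro q a b hab
    have : Mq q (a - b) = 0 := by rw [map_sub, hab, sub_self]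
    have := hMzero q _ this
    exact sub_eq_zero.mp this
  have hMbij : ∀ q, Function.Bijective (Mq q) := fun q =>
    ⟨hMinj q, LinearMap.injective_iff_surjective.mp (hMinj q)⟩
  let Meq : ∀ q : M, EuclideanSpace ℝ (Fin n) ≃L[ℝ] EuclideanSpace ℝ (Fin n) :=
    fun q => (LinearEquiv.ofBijective (Mq q).toLinearMap (hMbij q)).toContinuousLinearEquiv
  have hMeq : ∀ q x, Meq q x = Mq q x := fun _ _ => rfl
  -- the frame
  let b := (EuclideanSpace.basisFun (Fin n) ℝ).toBasis
  let v : Fin n → ∀ q : M, TangentSpace (𝓡 n) q := fun i q => (Meq q).symm (b i)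
  refine ⟨v, ?_, ?_⟩
  · -- continuity
    intro i
    rw [continuous_iff_continuousAt]
    intro q₀
    rw [FiberBundle.continuousAt_totalSpace]
    refine ⟨continuousAt_id, ?_⟩
    set g : EuclideanSpace ℝ (Fin n) → EuclideanSpace ℝ (Fin (n + 1)) :=
      f ∘ (extChartAt (𝓡 n) q₀).symm with hg
    set φ : M → EuclideanSpace ℝ (Fin n) := fun q => extChartAt (𝓡 n) q₀ q with hφ
    set P : M → EuclideanSpace ℝ (Fin n) →L[ℝ] EuclideanSpace ℝ (Fin n) :=
      fun q => ψ.comp ((A q).comp (fderiv ℝ g (φ q))) with hP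
    have hsrc : (extChartAt (𝓡 n) q₀).source ∈ nhds q₀ := extChartAt_source_mem_nhds q₀
    have hPM : ∀ q ∈ (extChartAt (𝓡 n) q₀).source,
        (P q).comp (tangentCoordChange (𝓡 n) q q₀ q) = Mq q := by
      intro q hq
      simp only [hP, hMq, hDf, hg, hφ]
      rw [aux_mfderiv_decomp f hf q₀ q hq]
      ext x
      simp [ContinuousLinearMap.comp_apply]
    have hPb : ∀ q ∈ (extChartAt (𝓡 n) q₀).source,
        P q (tangentCoordChange (𝓡 n) q q₀ q (v i q)) = b i := by
      intro q hq
      have h1 := congrArg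
        (fun (T : EuclideanSpace ℝ (Fin n) →L[ℝ] EuclideanSpace ℝ (Fin n)) => T (v i q))
        (hPM q hq)
      simp only [ContinuousLinearMap.comp_apply] at h1
      refine h1.trans ?_
      show Mq q ((Meq q).symm (b i)) = b i
      have := (Meq q).apply_symm_apply (b i)
      rwa [hMeq] at this
    have hPunit : ∀ q ∈ (extChartAt (𝓡 n) q₀).source, IsUnit (P q) := by
      intro q hq
      have hsurj : Function.Surjective (P q) := by
        intro y
        obtain ⟨x, hx⟩ := (hMbij q).2 y
        refine ⟨tangentCoordChange (𝓡 n) q q₀ q x, ?_⟩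
        have h1 := congrArg
          (fun (T : EuclideanSpace ℝ (Fin n) →L[ℝ] EuclideanSpace ℝ (Fin n)) => T x) (hPM q hq)
        simp only [ContinuousLinearMap.comp_apply] at h1
        rw [h1, hx]
      have hinj : Function.Injective (P q) :=
        (LinearMap.injective_iff_surjective (f := (P q).toLinearMap)).mpr hsurj
      exact ⟨((LinearEquiv.ofBijective (P q).toLinearMap
        ⟨hinj, hsurj⟩).toContinuousLinearEquiv).toUnit, ContinuousLinearMap.ext fun x => rfl⟩
    have hPcont : ContinuousAt P q₀ := by
      have hgd := ((hf.contMDiffOn (s := univ)).comp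
        (contMDiffOn_extChartAt_symm (I := 𝓡 n) q₀) (fun x _ => mem_univ _)).contDiffOn
      rw [← hg] at hgd
      have hopen : IsOpen (extChartAt (𝓡 n) q₀).target := isOpen_extChartAt_target q₀
      have h3 : ContinuousOn (fderiv ℝ g) (extChartAt (𝓡 n) q₀).target :=
        hgd.continuousOn_fderiv_of_isOpen hopen (by exact_mod_cast le_top)
      have h5 : ContinuousOn (fun q => fderiv ℝ g (φ q)) (extChartAt (𝓡 n) q₀).source :=
        h3.comp (continuousOn_extChartAt q₀) (fun x hx => (extChartAt (𝓡 n) q₀).map_source hx)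
      have hPon : ContinuousOn P (extChartAt (𝓡 n) q₀).source :=
        continuousOn_const.clm_comp ((hAc.continuousOn).clm_comp h5)
      exact hPon.continuousAt hsrc
    have hRinv : ContinuousAt (fun q => Ring.inverse (P q) (b i)) q₀ := by
      obtain ⟨u, hu⟩ := hPunit q₀ (mem_extChartAt_source q₀)
      have h7 : ContinuousAt Ring.inverse (P q₀) := hu ▸ NormedRing.inverse_continuousAt u
      have h8 : ContinuousAt (fun q => Ring.inverse (P q)) q₀ := h7.comp hPcont
      exact isBoundedBilinearMap_apply.continuous.continuousAt.comp (h8.prodMk continuousAt_const)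
    refine hRinv.congr ?_
    filter_upwards [hsrc] with q hq
    show Ring.inverse (P q) (b i) =
      (trivializationAt (EuclideanSpace ℝ (Fin n)) (TangentSpace (𝓡 n)) q₀ ⟨q, v i q⟩).2
    have h9 : (trivializationAt (EuclideanSpace ℝ (Fin n)) (TangentSpace (𝓡 n)) q₀
        ⟨q, v i q⟩).2 = tangentCoordChange (𝓡 n) q q₀ q (v i q) := rfl
    rw [h9]
    obtain ⟨u, hu⟩ := hPunit q hq
    calc Ring.inverse (P q) (b i)
        = Ring.inverse (P q) (P q (tangentCoordChange (𝓡 n) q q₀ q (v i q))) := by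
          rw [hPb q hq]
      _ = ((Ring.inverse (P q)) * (P q)) (tangentCoordChange (𝓡 n) q q₀ q (v i q)) := rfl
      _ = tangentCoordChange (𝓡 n) q q₀ q (v i q) := by
          rw [← hu, Ring.inverse_unit, u.inv_mul, ContinuousLinearMap.one_apply]
  · -- linear independence and spanning
    intro q
    have hvq : (fun i => v i q) = ⇑(b.map (Meq q).symm.toLinearEquiv) := by
      funext i
      show (Meq q).symm (b i) = _
      rw [Module.Basis.map_apply]
      rfl
    constructor
    · exact hvq ▸ (b.map (Meq q).symm.toLinearEquiv).linearIndependent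
    · exact hvq ▸ (b.map (Meq q).symm.toLinearEquiv).span_eq
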